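/- For every real a > 0, the function x ↦ tanh(a·x)/x is strictly decreasing on (0, ∞). -/

import Mathlib

theorem stmt_10 (a : ℝ) (ha : 0 < a) :
    StrictAntiOn (fun x : ℝ => Real.tanh (a * x) / x) (Set.Ioi 0) := by
  have key : ∀ x : ℝ, 0 < x → HasDerivAt (fun x : ℝ => Real.tanh (a * x) / x)
      ((a * x - Real.sinh (a * x) * Real.cosh (a * x)) /
        (Real.cosh (a * x) * x) ^ 2) x := by
    intro x hx
    have hc : Real.cosh (a * x) ≠ 0 := (Real.cosh_pos (a * x)).ne'
    have hden : Real.cosh (a * x) * x ≠ 0 := mul_ne_zero hc hx.ne'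
    have hlin : HasDerivAt (fun y : ℝ => a * y) a x := by
      simpa using (hasDerivAt_id x).const_mul a
    have hs : HasDerivAt (fun x : ℝ => Real.sinh (a * x)) (Real.cosh (a * x) * a) x :=
      (Real.hasDerivAt_sinh (a * x)).comp x hlin
    have hco : HasDerivAt (fun x : ℝ => Real.cosh (a * x)) (Real.sinh (a * x) * a) x :=
      (Real.hasDerivAt_cosh (a * x)).comp x hlin
    have hd : HasDerivAt (fun x : ℝ => Real.cosh (a * x) * x)
        (Real.sinh (a * x) * a * x + Real.cosh (a * x) * 1) x :=
      hco.mul (hasDerivAt_id x)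
    have := hs.div hd hden
    have heq : (fun x : ℝ => Real.sinh (a * x) / (Real.cosh (a * x) * x)) =
        fun x : ℝ => Real.tanh (a * x) / x := by
      funext y
      rw [Real.tanh_eq_sinh_div_cosh, div_div]
    change HasDerivAt (fun x : ℝ => Real.sinh (a * x) / (Real.cosh (a * x) * x)) _ x at this
    rw [heq] at this
    have hpy : Real.cosh (a * x) ^ 2 - Real.sinh (a * x) ^ 2 = 1 :=
      Real.cosh_sq_sub_sinh_sq (a * x)
    convert this using 2
    linear_combination (-(a * x)) * hpy
  apply strictAntiOn_of_hasDerivWithinAt_neg (f' := fun x =>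
      (a * x - Real.sinh (a * x) * Real.cosh (a * x)) / (Real.cosh (a * x) * x) ^ 2)
      (convex_Ioi 0)
  · intro x hx
    exact ((key x hx).continuousAt).continuousWithinAt
  · intro x hx
    rw [interior_Ioi] at hx
    exact (key x hx).hasDerivWithinAt
  · intro x hx
    rw [interior_Ioi] at hx
    have hax : 0 < a * x := mul_pos ha hx
    have h1 : a * x < Real.sinh (a * x) := Real.self_lt_sinh_iff.mpr hax
    have h2 : 1 < Real.cosh (a * x) := Real.one_lt_cosh.mpr hax.ne'
    have hs : 0 < Real.sinh (a * x) := hax.trans h1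
    have hnum : a * x - Real.sinh (a * x) * Real.cosh (a * x) < 0 := by nlinarith
    have hden : 0 < (Real.cosh (a * x) * x) ^ 2 :=
      pow_pos (mul_pos (Real.cosh_pos (a * x)) hx) 2
    exact div_neg_of_neg_of_pos hnum hden
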